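/- Let ε > 0, let π̄ ∈ (0,1), and suppose that for every t̄ > t₋good one has ν_T((t₋good, t̄]) > 0 and ν_F((t₋good, t̄]) ≤ ε·ν_T((t₋good, t̄]), and also ν_T((t₋good, ∞)) > 0 and ν_F((t₋good, ∞)) ≤ ε·ν_T((t₋good, ∞)). Then for all π, π′ ∈ [0, π̄] and all t̄ > t₋good, |G(π′, t̄)/G(π, t̄) − 1| ≤ (π̄/(1−π̄))·ε. (General version of Proposition 2: for any upper bound π̄ on the share of false factors, the well-observed conditional distribution changes by at most a factor (π̄/(1−π̄))·ε.) -/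

import Mathlib

open MeasureTheory

/-- The mixture measure ν_π := π·ν_F + (1−π)·ν_T. -/
noncomputable def mixMeasure (νF νT : Measure ℝ) (π : ℝ) : Measure ℝ :=
  ENNReal.ofReal π • νF + ENNReal.ofReal (1 - π) • νT

/-- Conditional distribution function of well-observed t-statistics:
G(π, t̄) := ν_π((t_good, t̄]) / ν_π((t_good, ∞)). -/
noncomputable def condCDF' (νF νT : Measure ℝ) (tgood π tbar : ℝ) : ℝ :=
  ((mixMeasure νF νT π) (Set.Ioc tgood tbar)).toReal /
    ((mixMeasure νF νT π) (Set.Ioi tgood)).toReal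

set_option maxHeartbeats 1000000 in
lemma key_arith (a b A B ε πbar π π' : ℝ) (ha : 0 ≤ a) (hb : 0 < b) (hA : 0 ≤ A) (hB : 0 < B)
    (haε : a ≤ ε * b) (hAε : A ≤ ε * B) (hε : 0 < ε)
    (h0 : 0 < πbar) (h1 : πbar < 1)
    (hπ0 : 0 ≤ π) (hπ1 : π ≤ πbar) (hπ'0 : 0 ≤ π') (hπ'1 : π' ≤ πbar) :
    |((π' * a + (1 - π') * b) / (π' * A + (1 - π') * B)) /
      ((π * a + (1 - π) * b) / (π * A + (1 - π) * B)) - 1| ≤ πbar / (1 - πbar) * ε := by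
  have hπlt : π < 1 := lt_of_le_of_lt hπ1 h1
  have hπ'lt : π' < 1 := lt_of_le_of_lt hπ'1 h1
  have hN : 0 < π * a + (1 - π) * b := by nlinarith
  have hD : 0 < π * A + (1 - π) * B := by nlinarith
  have hN' : 0 < π' * a + (1 - π') * b := by nlinarith
  have hD' : 0 < π' * A + (1 - π') * B := by nlinarith
  have hEq : ((π' * a + (1 - π') * b) / (π' * A + (1 - π') * B)) /
      ((π * a + (1 - π) * b) / (π * A + (1 - π) * B)) - 1
      = ((π' - π) * (a * B - b * A)) / ((π * a + (1 - π) * b) * (π' * A + (1 - π') * B)) := by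
    rw [div_div_div_eq, div_sub_one (mul_pos hD' hN).ne',
      div_eq_div_iff (mul_pos hD' hN).ne' (mul_pos hN hD').ne']
    ring
  rw [hEq, abs_div, abs_of_pos (mul_pos hN hD'), abs_mul]
  have h2 : |a * B - b * A| ≤ ε * b * B := by
    rw [abs_le]; constructor <;> nlinarith
  have h3 : |π' - π| * |a * B - b * A| ≤ |π' - π| * (ε * b * B) := by
    gcongr
  have h4 : (1 - π) * b * ((1 - π') * B) ≤ (π * a + (1 - π) * b) * (π' * A + (1 - π') * B) := by
    have e1 : (1 - π) * b ≤ π * a + (1 - π) * b := by nlinarith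
    have e2 : (1 - π') * B ≤ π' * A + (1 - π') * B := by nlinarith
    exact mul_le_mul e1 e2 (mul_nonneg (by linarith) hB.le) hN.le
  have h5 : |π' - π| * |a * B - b * A| / ((π * a + (1 - π) * b) * (π' * A + (1 - π') * B))
      ≤ |π' - π| * (ε * b * B) / ((1 - π) * b * ((1 - π') * B)) := by
    apply div_le_div₀ (by positivity) h3 (mul_pos (mul_pos (by linarith) hb) (mul_pos (by linarith) hB)) h4
  refine h5.trans ?_
  have h7 : |π' - π| * (1 - πbar) ≤ πbar * ((1 - π) * (1 - π')) := by
    have t1 : 0 ≤ (πbar - π') * (1 - π) := mul_nonneg (by linarith) (by linarith)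
    have t2 : 0 ≤ π * ((1 - π') * (1 - πbar)) :=
      mul_nonneg hπ0 (mul_nonneg (by linarith) (by linarith))
    have t3 : 0 ≤ (πbar - π) * (1 - π') := mul_nonneg (by linarith) (by linarith)
    have t4 : 0 ≤ π' * ((1 - π) * (1 - πbar)) :=
      mul_nonneg hπ'0 (mul_nonneg (by linarith) (by linarith))
    have id1 : πbar * ((1 - π) * (1 - π')) - (π' - π) * (1 - πbar)
        = (πbar - π') * (1 - π) + π * ((1 - π') * (1 - πbar)) := by ring
    have id2 : πbar * ((1 - π) * (1 - π')) - (-(π' - π)) * (1 - πbar)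
        = (πbar - π) * (1 - π') + π' * ((1 - π) * (1 - πbar)) := by ring
    rcases abs_cases (π' - π) with ⟨h, _⟩ | ⟨h, _⟩ <;> rw [h] <;> linarith
  have h6 : |π' - π| * (ε * b * B) / ((1 - π) * b * ((1 - π') * B))
      = |π' - π| * ε / ((1 - π) * (1 - π')) := by
    rw [div_eq_div_iff (mul_pos (mul_pos (by linarith : (0:ℝ) < 1 - π) hb)
        (mul_pos (by linarith : (0:ℝ) < 1 - π') hB)).ne'
      (mul_pos (by linarith : (0:ℝ) < 1 - π) (by linarith : (0:ℝ) < 1 - π')).ne']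
    ring
  have h8 : πbar / (1 - πbar) * ε = πbar * ε / (1 - πbar) := by ring
  rw [h6, h8, div_le_div_iff₀ (mul_pos (by linarith : (0:ℝ) < 1 - π)
      (by linarith : (0:ℝ) < 1 - π')) (by linarith : (0:ℝ) < 1 - πbar)]
  calc |π' - π| * ε * (1 - πbar) = (|π' - π| * (1 - πbar)) * ε := by ring
    _ ≤ (πbar * ((1 - π) * (1 - π'))) * ε := mul_le_mul_of_nonneg_right h7 hε.le
    _ = πbar * ε * ((1 - π) * (1 - π')) := by ring

lemma mix_toReal (νF νT : Measure ℝ) [IsProbabilityMeasure νF] [IsProbabilityMeasure νT]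
    (π : ℝ) (hπ0 : 0 ≤ π) (hπ1 : π ≤ 1) (s : Set ℝ) :
    ((mixMeasure νF νT π) s).toReal = π * (νF s).toReal + (1 - π) * (νT s).toReal := by
  have hF : νF s ≠ ⊤ := (measure_lt_top νF s).ne
  have hT : νT s ≠ ⊤ := (measure_lt_top νT s).ne
  simp only [mixMeasure, Measure.coe_add, Pi.add_apply, Measure.smul_apply, smul_eq_mul]
  rw [ENNReal.toReal_add (by finiteness) (by finiteness), ENNReal.toReal_mul,
    ENNReal.toReal_mul, ENNReal.toReal_ofReal hπ0, ENNReal.toReal_ofReal (by linarith)]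

/-- Proposition 2 (Weak Identification): when false factors are ε-times less
likely than true factors to land in the well-observed region, the share of
false factors π ranging anywhere in [0, π̄] changes the well-observed
conditional distribution by at most a factor (π̄/(1−π̄))·ε. -/
theorem weak_identification_general
    (νF νT : Measure ℝ) [IsProbabilityMeasure νF] [IsProbabilityMeasure νT]
    (hνFsupp : νF (Set.Iio 0) = 0) (hνTsupp : νT (Set.Iio 0) = 0)
    (tgood : ℝ) (htgood : 0 < tgood)
    (ε : ℝ) (hε : 0 < ε) (πbar : ℝ) (hπbar : πbar ∈ Set.Ioo (0 : ℝ) 1)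
    (hIoc : ∀ tbar : ℝ, tgood < tbar →
      0 < (νT (Set.Ioc tgood tbar)).toReal ∧
      (νF (Set.Ioc tgood tbar)).toReal ≤ ε * (νT (Set.Ioc tgood tbar)).toReal)
    (hIoiT : 0 < (νT (Set.Ioi tgood)).toReal)
    (hIoiF : (νF (Set.Ioi tgood)).toReal ≤ ε * (νT (Set.Ioi tgood)).toReal) :
    ∀ π π' : ℝ, π ∈ Set.Icc (0 : ℝ) πbar → π' ∈ Set.Icc (0 : ℝ) πbar →
      ∀ tbar : ℝ, tgood < tbar →
        |condCDF' νF νT tgood π' tbar / condCDF' νF νT tgood π tbar - 1| ≤ (πbar / (1 - πbar)) * ε := by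
  obtain ⟨hπbar0, hπbar1⟩ := hπbar
  rintro π π' ⟨hπ0, hπ1⟩ ⟨hπ'0, hπ'1⟩ tbar htbar
  obtain ⟨hb, haε⟩ := hIoc tbar htbar
  have ha : 0 ≤ (νF (Set.Ioc tgood tbar)).toReal := ENNReal.toReal_nonneg
  have hA : 0 ≤ (νF (Set.Ioi tgood)).toReal := ENNReal.toReal_nonneg
  rw [condCDF', condCDF',
    mix_toReal νF νT π hπ0 (by linarith), mix_toReal νF νT π hπ0 (by linarith),
    mix_toReal νF νT π' hπ'0 (by linarith), mix_toReal νF νT π' hπ'0 (by linarith)]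
  exact key_arith _ _ _ _ ε πbar π π' ha hb hA hIoiT haε hIoiF hε hπbar0 hπbar1
    hπ0 hπ1 hπ'0 hπ'1
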